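/- For an acyclically ordered skew-symmetrizable matrix, the full mutation sequence 1, 2, …, n is a mutation symmetry: if B = [b_{ij}] is an n×n skew-symmetrizable real matrix with the property that b_{ij} > 0 implies i < j, then (μ_n ∘ μ_{n−1} ∘ ⋯ ∘ μ_1)(B) = B. -/

import Mathlib

/-- Matrix mutation in direction `k`. -/
def mutate {n : ℕ} (B : Matrix (Fin n) (Fin n) ℝ) (k : Fin n) :
    Matrix (Fin n) (Fin n) ℝ :=
  fun i j =>
    if i = k ∨ j = k then -B i j
    else B i j + max 0 (-B i k) * B k j + B i k * max 0 (B k j)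

lemma corr_zero (a b : ℝ) (ha : a ≤ 0) (hb : 0 ≤ b) :
    max 0 (-a) * b + a * max 0 b = 0 := by
  rw [max_eq_right (neg_nonneg.mpr ha), max_eq_right hb]; ring

/-- For an acyclically ordered skew-symmetrizable matrix, mutating successively
at `1, 2, …, n` returns the original matrix. -/
theorem mutate_sequence_symmetry {n : ℕ} (B : Matrix (Fin n) (Fin n) ℝ)
    (d : Fin n → ℝ) (hd : ∀ i, 0 < d i)
    (hskew : ∀ i j, d i * B i j = -(d j * B j i))
    (hacyclic : ∀ i j, 0 < B i j → i < j) :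
    (List.finRange n).foldl mutate B = B := by
  have hdiag : ∀ i, B i i = 0 := by
    intro i
    have h := hskew i i
    have hdi := hd i
    nlinarith
  have hlower : ∀ i j : Fin n, j ≤ i → B i j ≤ 0 := by
    intro i j hji
    by_contra h
    push_neg at h
    exact absurd (hacyclic i j h) (not_lt.mpr hji)
  have hupper : ∀ i j : Fin n, i ≤ j → 0 ≤ B i j := by
    intro i j hij
    by_contra h
    push_neg at h
    have hji : 0 < B j i := by
      have h1 := hskew i j
      have h2 := hd i; have h3 := hd j
      nlinarith
    exact absurd (hacyclic j i hji) (not_lt.mpr hij)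
  have key : ∀ k : ℕ, k ≤ n →
      ((List.finRange n).take k).foldl mutate B =
        fun (i j : Fin n) => (if (i : ℕ) < k then (-1 : ℝ) else 1) *
          (if (j : ℕ) < k then (-1 : ℝ) else 1) * B i j := by
    intro k
    induction k with
    | zero => intro _; funext i j; simp
    | succ k ih =>
      intro hk1
      have hk : k < n := hk1
      have hkn : k ≤ n := le_of_lt hk
      have htake : (List.finRange n).take (k + 1) =
          (List.finRange n).take k ++ [(⟨k, hk⟩ : Fin n)] := by
        rw [List.take_succ]
        congr 1
        have : (List.finRange n)[k]? = some (⟨k, hk⟩ : Fin n) := by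
          rw [List.getElem?_eq_getElem (by simpa using hk)]
          simp
        simp [this]
      rw [htake, List.foldl_append, ih hkn]
      change mutate _ (⟨k, hk⟩ : Fin n) = _
      set kf : Fin n := ⟨k, hk⟩ with hkf
      have hek : ¬ ((kf : ℕ) < k) := lt_irrefl k
      have hcol : ∀ i : Fin n, (i : ℕ) ≠ k →
          (if (i : ℕ) < k then (-1 : ℝ) else 1) * B i kf ≤ 0 := by
        intro i hi
        rcases lt_or_gt_of_ne hi with h | h
        · rw [if_pos h]
          have := hupper i kf (by rw [Fin.le_def]; simp [hkf]; omega)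
          linarith
        · rw [if_neg (by omega)]
          have := hlower i kf (by rw [Fin.le_def]; simp [hkf]; omega)
          linarith
      have hrow : ∀ j : Fin n, (j : ℕ) ≠ k →
          0 ≤ (if (j : ℕ) < k then (-1 : ℝ) else 1) * B kf j := by
        intro j hj
        rcases lt_or_gt_of_ne hj with h | h
        · rw [if_pos h]
          have := hlower kf j (by rw [Fin.le_def]; simp [hkf]; omega)
          linarith
        · rw [if_neg (by omega)]
          have := hupper kf j (by rw [Fin.le_def]; simp [hkf]; omega)
          linarith
      funext i j
      simp only [mutate, if_neg hek, one_mul, mul_one]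
      by_cases hi : i = kf
      · have hik : (i : ℕ) = k := by rw [hi]
        rw [if_pos (Or.inl hi)]
        by_cases hj : j = kf
        · rw [hi, hj]
          simp [hdiag]
        · have hjk : (j : ℕ) ≠ k := fun h => hj (Fin.ext (h.trans rfl))
          rw [if_neg (show ¬ (i : ℕ) < k by omega),
            if_pos (show (i : ℕ) < k + 1 by omega),
            if_congr (show ((j : ℕ) < k + 1 ↔ (j : ℕ) < k) by omega) rfl rfl]
          ring
      · have hik : (i : ℕ) ≠ k := fun h => hi (Fin.ext (h.trans rfl))
        by_cases hj : j = kf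
        · have hjk : (j : ℕ) = k := by rw [hj]
          rw [if_pos (Or.inr hj),
            if_neg (show ¬ (j : ℕ) < k by omega),
            if_pos (show (j : ℕ) < k + 1 by omega),
            if_congr (show ((i : ℕ) < k + 1 ↔ (i : ℕ) < k) by omega) rfl rfl]
          ring
        · have hjk : (j : ℕ) ≠ k := fun h => hj (Fin.ext (h.trans rfl))
          rw [if_neg (by tauto),
            if_congr (show ((i : ℕ) < k + 1 ↔ (i : ℕ) < k) by omega) rfl rfl,
            if_congr (show ((j : ℕ) < k + 1 ↔ (j : ℕ) < k) by omega) rfl rfl]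
          have hz := corr_zero _ _ (hcol i hik) (hrow j hjk)
          linarith
  have hfin := key n le_rfl
  rw [List.take_of_length_le (by simp)] at hfin
  rw [hfin]
  funext i j
  simp [i.isLt, j.isLt]
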